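/- In Euclidean R³ with the standard area 2-density, identify Λ²TR³ with TR³ via the cross product. For a regular surface f(r,s) with unit normal n and tangent lift f̃ = (f,n), the mean curvature covector, computed as the restriction to the unit bundle of dω₂( · ∧ (∂_r f̃ ∧ ∂_s f̃)/|∂_r f ∧ ∂_s f| ), equals h = −H·⟨n, ·⟩ where H is the (scalar) mean curvature of f, i.e., minus the trace of the differential of the Gauss map. -/

import Mathlib

/-!
STATEMENT 14: In Euclidean `ℝ³` with the standard area 2-density, identify `Λ²Tℝ³`
with `Tℝ³` via the cross product.  For a regular surface `f(r,s)` with unit normal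
`n` and tangent lift `f̃ = (f, n)`, the mean curvature covector, computed as the
restriction to the unit bundle of `dω₂(· ∧ (∂_r f̃ ∧ ∂_s f̃)/|∂_r f ∧ ∂_s f|)`,
equals `h = −M·⟨n, ·⟩`, where `M` is the scalar mean curvature (minus the trace of
the differential of the Gauss map).

The Hilbert 2-form is `ω₂ at (x,v) applied to (Y,Z) = ⟨v, Dπ Y × Dπ Z⟩` (i.e. the
restriction of `v₁ dx₂∧dx₃ + v₂ dx₃∧dx₁ + v₃ dx₁∧dx₂`), and `dω₂` is computed on
constant vector fields.  All data is taken at one point: `fr, fs` are the partials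
of `f`; `nr, ns` those of `n`, written `∂_r n = α ∂_r f + β ∂_s f`,
`∂_s n = γ ∂_r f + δ ∂_s f`, so that `M = −(α + δ)`; `ũ = (u,w)` is a lift of `u`
tangent to the unit bundle (`⟨n,w⟩ = 0`); the contraction with the normalised tangent
2-vector of the lift is division by `‖fr × fs‖`.
-/

open scoped RealInnerProductSpace

noncomputable section

abbrev E3 := EuclideanSpace ℝ (Fin 3)

/-- Cross product on Euclidean `ℝ³`. -/
def cross3 (a b : E3) : E3 :=
  (WithLp.equiv 2 (Fin 3 → ℝ)).symm
    (crossProduct ((WithLp.equiv 2 (Fin 3 → ℝ)) a) ((WithLp.equiv 2 (Fin 3 → ℝ)) b))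

/-- The Hilbert 2-form of the Euclidean area density on `ℝ³` (ambiently extended). -/
def hilbertTwo (z : E3 × E3) (Y Z : E3 × E3) : ℝ := ⟪z.2, cross3 Y.1 Z.1⟫

/-- Exterior derivative of a 2-form on constant vector fields. -/
def dTwo (ω : E3 × E3 → E3 × E3 → E3 × E3 → ℝ) (z X Y Z : E3 × E3) : ℝ :=
  fderiv ℝ (fun y => ω y Y Z) z X - fderiv ℝ (fun y => ω y X Z) z Y +
    fderiv ℝ (fun y => ω y X Y) z Z

lemma fderiv_inner_snd (c : E3) (z X : E3 × E3) :
    fderiv ℝ (fun y : E3 × E3 => (⟪y.2, c⟫ : ℝ)) z X = ⟪X.2, c⟫ := by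
  have h : (fun y : E3 × E3 => (⟪y.2, c⟫ : ℝ)) =
      fun y => ((innerSL ℝ c).comp (ContinuousLinearMap.snd ℝ E3 E3)) y := by
    ext y
    simp [real_inner_comm, mul_comm]
  rw [h, ContinuousLinearMap.fderiv]
  simp [real_inner_comm, mul_comm]

lemma key_cross_identity (fr fs u : E3) (α β γ δ : ℝ) :
    -(⟪(α • fr + β • fs : E3), cross3 u fs⟫ : ℝ) + ⟪(γ • fr + δ • fs : E3), cross3 u fr⟫
      = (α + δ) * ⟪u, cross3 fr fs⟫ := by
  simp only [cross3, crossProduct, PiLp.inner_apply, RCLike.inner_apply, starRingEnd_apply,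
    star_trivial, Fin.sum_univ_three, WithLp.equiv_symm_apply, PiLp.toLp_apply, WithLp.equiv_apply,
    LinearMap.mk₂_apply, PiLp.add_apply, PiLp.smul_apply, smul_eq_mul,
    Matrix.cons_val_zero, Matrix.cons_val_one, Matrix.head_cons, Matrix.cons_val_two,
    Matrix.tail_cons]
  ring

theorem mean_curvature_covector_of_surface_in_R3
    (x fr fs nr ns : E3) (α β γ δ : ℝ)
    (hreg : cross3 fr fs ≠ 0)                    -- regularity of the surface
    (n : E3) (hn : n = ‖cross3 fr fs‖⁻¹ • cross3 fr fs)   -- the unit normal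
    (hnr : nr = α • fr + β • fs)                 -- differential of the Gauss map
    (hns : ns = γ • fr + δ • fs)
    (M : ℝ) (hM : M = -(α + δ))                  -- the scalar mean curvature
    (u w : E3) (hw : ⟪n, w⟫ = 0) :               -- a lift of `u` tangent to the unit bundle
    ‖cross3 fr fs‖⁻¹ *
        dTwo hilbertTwo (x, n) (u, w) (fr, nr) (fs, ns) = -M * ⟪n, u⟫ := by
  have hd : dTwo hilbertTwo (x, n) (u, w) (fr, nr) (fs, ns)
      = ⟪w, cross3 fr fs⟫ - ⟪nr, cross3 u fs⟫ + ⟪ns, cross3 u fr⟫ := by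
    simp only [dTwo, hilbertTwo, fderiv_inner_snd]
  have hw' : (⟪w, cross3 fr fs⟫ : ℝ) = 0 := by
    have hne : ‖cross3 fr fs‖ ≠ 0 := norm_ne_zero_iff.mpr hreg
    rw [hn, real_inner_smul_left] at hw
    rw [real_inner_comm]
    rcases mul_eq_zero.mp hw with h | h
    · exact absurd (inv_eq_zero.mp h) hne
    · exact h
  rw [hd, hw', hnr, hns, hM, hn, real_inner_smul_left]
  have hk := key_cross_identity fr fs u α β γ δ
  rw [real_inner_comm (cross3 fr fs) u] at hk
  linear_combination ‖cross3 fr fs‖⁻¹ * hk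
end
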